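/- Let d ≥ 2 be an integer, β > 0, and let x, y ∈ ℝ^d be unit vectors with z = ⟨x, y⟩. Define a = (1/2)(e^β x + e^{βz} y) and b = (1/2)(e^β y + e^{βz} x). Then ((1 − d)/2)·z·(‖a‖² + ‖b‖²) + (z² + d − 2)·⟨a, b⟩ = (1/4)(1 − z²)·( 2(d − 2) e^{β(1+z)} − z (e^{2β} + e^{2βz}) ). -/
import Mathlib


open RealInnerProductSpace Real

/-- Explicit overlap drift for two tokens with unnormalized self-attention:
with `z = ⟨x, y⟩`, `a = ½(e^β x + e^{βz} y)`, `b = ½(e^β y + e^{βz} x)`,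
`((1−d)/2) z (‖a‖² + ‖b‖²) + (z² + d − 2) ⟨a, b⟩
  = ¼ (1 − z²)(2(d−2)e^{β(1+z)} − z(e^{2β} + e^{2βz}))`. -/
theorem overlap_drift_unnormalized (d : ℕ) (hd : 2 ≤ d) (β : ℝ) (hβ : 0 < β)
    (x y : EuclideanSpace ℝ (Fin d)) (hx : ‖x‖ = 1) (hy : ‖y‖ = 1)
    (z : ℝ) (hz : z = ⟪x, y⟫)
    (a b : EuclideanSpace ℝ (Fin d))
    (ha : a = (1 / 2 : ℝ) • (exp β • x + exp (β * z) • y))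
    (hb : b = (1 / 2 : ℝ) • (exp β • y + exp (β * z) • x)) :
    ((1 - (d : ℝ)) / 2) * z * (‖a‖ ^ 2 + ‖b‖ ^ 2) + (z ^ 2 + d - 2) * ⟪a, b⟫
      = (1 / 4) * (1 - z ^ 2)
          * (2 * ((d : ℝ) - 2) * exp (β * (1 + z)) - z * (exp (2 * β) + exp (2 * β * z))) := by
  have hxx : ⟪x, x⟫ = 1 := by
    rw [real_inner_self_eq_norm_sq, hx]; norm_num
  have hyy : ⟪y, y⟫ = 1 := by
    rw [real_inner_self_eq_norm_sq, hy]; norm_num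
  have hyx : ⟪y, x⟫ = z := by rw [real_inner_comm, ← hz]
  have hna : ‖a‖ ^ 2 = ⟪a, a⟫ := (real_inner_self_eq_norm_sq a).symm
  have hnb : ‖b‖ ^ 2 = ⟪b, b⟫ := (real_inner_self_eq_norm_sq b).symm
  have e1 : exp (2 * β) = exp β * exp β := by
    rw [two_mul, exp_add]
  have e2 : exp (2 * β * z) = exp (β * z) * exp (β * z) := by
    rw [← exp_add]; ring_nf
  have e3 : exp (β * (1 + z)) = exp β * exp (β * z) := by
    rw [← exp_add]; ring_nf
  rw [hna, hnb]
  simp only [ha, hb, inner_add_left, inner_add_right, real_inner_smul_left,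
    real_inner_smul_right, hxx, hyy, hyx, ← hz, e1, e2, e3]
  ring
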